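/- Let φ: (ℂ*)^5 → ℂ^5 be the Somos-5 map φ(x_1,…,x_5) = (x_2, x_3, x_4, x_5, (x_2 x_5 + x_3 x_4)/x_1), with components φ_1,…,φ_5. Then φ preserves the log-canonical Poisson bracket with coefficient matrix c_{jk} = j - k: for all j, k ∈ {1,…,5} and all x with nonzero coordinates, Σ_{a=1}^{5} Σ_{b=1}^{5} (a-b) x_a x_b (∂φ_j/∂x_a)(∂φ_k/∂x_b) = (j-k) φ_j(x) φ_k(x). -/

import Mathlib

open scoped BigOperators

noncomputable def somos5Map (x : Fin 5 → ℂ) : Fin 5 → ℂ :=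
  ![x 1, x 2, x 3, x 4, (x 1 * x 4 + x 2 * x 3) / x 0]

private noncomputable def DM (x : Fin 5 → ℂ) : Fin 5 → Fin 5 → ℂ :=
  ![![0,1,0,0,0], ![0,0,1,0,0], ![0,0,0,1,0], ![0,0,0,0,1],
    ![-(x 1 * x 4 + x 2 * x 3) / x 0 ^ 2, x 4 / x 0, x 3 / x 0, x 2 / x 0, x 1 / x 0]]

private lemma fdproj (x : Fin 5 → ℂ) (i a : Fin 5) :
    fderiv ℂ (fun y : Fin 5 → ℂ => y i) x (Pi.single a 1) = if i = a then 1 else 0 := by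
  have hp : HasFDerivAt (𝕜 := ℂ) (fun y : Fin 5 → ℂ => y i)
      (ContinuousLinearMap.proj (R := ℂ) i) x := hasFDerivAt_apply i x
  rw [hp.fderiv]
  simp [Pi.single_apply, eq_comm]

private lemma fd4 (x : Fin 5 → ℂ) (h0 : x 0 ≠ 0) (a : Fin 5) :
    fderiv ℂ (fun y : Fin 5 → ℂ => (y 1 * y 4 + y 2 * y 3) / y 0) x (Pi.single a 1) =
    ![-(x 1 * x 4 + x 2 * x 3) / x 0 ^ 2, x 4 / x 0, x 3 / x 0, x 2 / x 0, x 1 / x 0] a := by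
  have hp : ∀ i : Fin 5, HasFDerivAt (𝕜 := ℂ) (fun y : Fin 5 → ℂ => y i)
      (ContinuousLinearMap.proj (R := ℂ) i) x := fun i => hasFDerivAt_apply i x
  have hinv : HasFDerivAt (fun y : Fin 5 → ℂ => (y 0)⁻¹)
      ((-ContinuousLinearMap.mulLeftRight ℂ ℂ (x 0)⁻¹ (x 0)⁻¹).comp
        (ContinuousLinearMap.proj (R := ℂ) 0)) x :=
    (hasFDerivAt_inv' h0).comp x (hp 0)
  have h := ((((hp 1).mul (hp 4)).add ((hp 2).mul (hp 3))).mul hinv).fderiv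
  simp only [div_eq_mul_inv]
  rw [show (fun y : Fin 5 → ℂ => (y 1 * y 4 + y 2 * y 3) * (y 0)⁻¹) =
    ((((fun y : Fin 5 → ℂ => y 1) * fun y : Fin 5 → ℂ => y 4) +
      (fun y : Fin 5 → ℂ => y 2) * fun y : Fin 5 → ℂ => y 3) *
        fun y : Fin 5 → ℂ => (y 0)⁻¹) from rfl, h]
  fin_cases a <;>
    simp [Pi.single_apply, ContinuousLinearMap.proj_apply] <;>
    field_simp <;> (try ring) <;> (try left) <;> (try trivial)

private lemma fd (x : Fin 5 → ℂ) (h0 : x 0 ≠ 0) (j a : Fin 5) :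
    fderiv ℂ (fun y => somos5Map y j) x (Pi.single a 1) = DM x j a := by
  fin_cases j
  · show fderiv ℂ (fun y : Fin 5 → ℂ => y 1) x (Pi.single a 1) = _
    rw [fdproj]; fin_cases a <;> simp [DM]
  · show fderiv ℂ (fun y : Fin 5 → ℂ => y 2) x (Pi.single a 1) = _
    rw [fdproj]; fin_cases a <;> simp [DM]
  · show fderiv ℂ (fun y : Fin 5 → ℂ => y 3) x (Pi.single a 1) = _
    rw [fdproj]; fin_cases a <;> simp [DM]
  · show fderiv ℂ (fun y : Fin 5 → ℂ => y 4) x (Pi.single a 1) = _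
    rw [fdproj]; fin_cases a <;> simp [DM]
  · show fderiv ℂ (fun y : Fin 5 → ℂ => (y 1 * y 4 + y 2 * y 3) / y 0) x (Pi.single a 1) = _
    rw [fd4 x h0]; rfl

set_option maxHeartbeats 1000000 in
private lemma dm00 (x : Fin 5 → ℂ) : DM x 0 0 = 0 := rfl
private lemma dm01 (x : Fin 5 → ℂ) : DM x 0 1 = 1 := rfl
private lemma dm02 (x : Fin 5 → ℂ) : DM x 0 2 = 0 := rfl
private lemma dm03 (x : Fin 5 → ℂ) : DM x 0 3 = 0 := rfl
private lemma dm04 (x : Fin 5 → ℂ) : DM x 0 4 = 0 := rfl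
private lemma dm10 (x : Fin 5 → ℂ) : DM x 1 0 = 0 := rfl
private lemma dm11 (x : Fin 5 → ℂ) : DM x 1 1 = 0 := rfl
private lemma dm12 (x : Fin 5 → ℂ) : DM x 1 2 = 1 := rfl
private lemma dm13 (x : Fin 5 → ℂ) : DM x 1 3 = 0 := rfl
private lemma dm14 (x : Fin 5 → ℂ) : DM x 1 4 = 0 := rfl
private lemma dm20 (x : Fin 5 → ℂ) : DM x 2 0 = 0 := rfl
private lemma dm21 (x : Fin 5 → ℂ) : DM x 2 1 = 0 := rfl
private lemma dm22 (x : Fin 5 → ℂ) : DM x 2 2 = 0 := rfl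
private lemma dm23 (x : Fin 5 → ℂ) : DM x 2 3 = 1 := rfl
private lemma dm24 (x : Fin 5 → ℂ) : DM x 2 4 = 0 := rfl
private lemma dm30 (x : Fin 5 → ℂ) : DM x 3 0 = 0 := rfl
private lemma dm31 (x : Fin 5 → ℂ) : DM x 3 1 = 0 := rfl
private lemma dm32 (x : Fin 5 → ℂ) : DM x 3 2 = 0 := rfl
private lemma dm33 (x : Fin 5 → ℂ) : DM x 3 3 = 0 := rfl
private lemma dm34 (x : Fin 5 → ℂ) : DM x 3 4 = 1 := rfl
private lemma dm40 (x : Fin 5 → ℂ) : DM x 4 0 = -(x 1 * x 4 + x 2 * x 3) / x 0 ^ 2 := rfl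
private lemma dm41 (x : Fin 5 → ℂ) : DM x 4 1 = x 4 / x 0 := rfl
private lemma dm42 (x : Fin 5 → ℂ) : DM x 4 2 = x 3 / x 0 := rfl
private lemma dm43 (x : Fin 5 → ℂ) : DM x 4 3 = x 2 / x 0 := rfl
private lemma dm44 (x : Fin 5 → ℂ) : DM x 4 4 = x 1 / x 0 := rfl
private lemma sm0 (x : Fin 5 → ℂ) : somos5Map x 0 = x 1 := rfl
private lemma sm1 (x : Fin 5 → ℂ) : somos5Map x 1 = x 2 := rfl
private lemma sm2 (x : Fin 5 → ℂ) : somos5Map x 2 = x 3 := rfl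
private lemma sm3 (x : Fin 5 → ℂ) : somos5Map x 3 = x 4 := rfl
private lemma sm4 (x : Fin 5 → ℂ) : somos5Map x 4 = (x 1 * x 4 + x 2 * x 3) / x 0 := rfl

private lemma fm0 (h : 0 < 5) : (⟨0, h⟩ : Fin 5) = 0 := rfl
private lemma fm1 (h : 1 < 5) : (⟨1, h⟩ : Fin 5) = 1 := rfl
private lemma fm2 (h : 2 < 5) : (⟨2, h⟩ : Fin 5) = 2 := rfl
private lemma fm3 (h : 3 < 5) : (⟨3, h⟩ : Fin 5) = 3 := rfl
private lemma fm4 (h : 4 < 5) : (⟨4, h⟩ : Fin 5) = 4 := rfl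

private lemma v3 : ((3 : Fin 5) : ℕ) = 3 := rfl
private lemma v4 : ((4 : Fin 5) : ℕ) = 4 := rfl

set_option maxHeartbeats 1000000 in
theorem somos5_preserves_log_canonical_bracket
    (x : Fin 5 → ℂ) (hx : ∀ i, x i ≠ 0) (j k : Fin 5) :
    ∑ a : Fin 5, ∑ b : Fin 5,
        ((a.val : ℂ) - (b.val : ℂ)) * x a * x b *
          fderiv ℂ (fun y => somos5Map y j) x (Pi.single a 1) *
          fderiv ℂ (fun y => somos5Map y k) x (Pi.single b 1)
      = ((j.val : ℂ) - (k.val : ℂ)) * somos5Map x j * somos5Map x k := by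
  have h0 := hx 0
  by_cases hjk : j = k
  · subst hjk
    have diag : ∀ D : Fin 5 → ℂ,
        (∑ a : Fin 5, ∑ b : Fin 5, ((a.val : ℂ) - (b.val : ℂ)) * x a * x b * D a * D b) = 0 := by
      intro D
      simp only [Fin.sum_univ_five]
      push_cast
      ring
    rw [diag (fun a => fderiv ℂ (fun y => somos5Map y j) x (Pi.single a 1)), sub_self,
      zero_mul, zero_mul]
  · simp only [fd x h0, Fin.sum_univ_five]
    fin_cases j <;> fin_cases k <;>
      first
      | exact absurd rfl hjk
      | (simp only [fm0, fm1, fm2, fm3, fm4]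
         simp only [dm00 x, dm01 x, dm02 x, dm03 x, dm04 x, dm10 x, dm11 x, dm12 x, dm13 x,
           dm14 x, dm20 x, dm21 x, dm22 x, dm23 x, dm24 x, dm30 x, dm31 x, dm32 x, dm33 x,
           dm34 x, dm40 x, dm41 x, dm42 x, dm43 x, dm44 x, sm0 x, sm1 x, sm2 x, sm3 x, sm4 x,
           Fin.val_zero, Fin.val_one, Fin.val_two, v3, v4, Nat.cast_ofNat, Nat.cast_one,
           Nat.cast_zero, Fin.isValue]
         field_simp [h0]
         all_goals (first | ring1 | (norm_num; try tauto)))
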